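/- arXiv:2108.08065 — 6 statements merged into one kernel-verified Lean document; each statement's English description precedes it below -/
import Mathlib

section
/- For the Hats game on the complete graph K_n with hatness function h : V → ℕ (h(v) ≥ 1 for all v), the sages have a winning strategy if and only if ∑_{v ∈ V} 1/h(v) ≥ 1. -/
open Finset

namespace HatsK

variable {n : ℕ} (h : Fin n → ℕ)

/-- Total: product of all hatnesses. -/
def L : ℕ := ∏ v, h v

/-- Interval length for sage `v`. -/
def d (v : Fin n) : ℕ := L h / h v

/-- Prefix sums of interval lengths. -/
def T (k : ℕ) : ℕ := ∑ i ∈ Finset.range k, if hi : i < n then d h ⟨i, hi⟩ else 0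

/-- Weighted sum of hats seen by `v`. -/
def R (v : Fin n) (c : ∀ u : Fin n, Fin (h u)) : ℕ :=
  ∑ u ∈ Finset.univ.erase v, (c u : ℕ) * d h u

/-- Correctness condition: guessing `g` puts the global weighted sum in `v`'s interval. -/
def cond (v : Fin n) (r g : ℕ) : Prop :=
  T h v ≤ (r + g * d h v) % L h ∧ (r + g * d h v) % L h < T h v + d h v

lemma hmul (v : Fin n) : h v * d h v = L h :=
  Nat.mul_div_cancel' (Finset.dvd_prod_of_mem h (mem_univ v))

lemma Lpos (hpos : ∀ v, 1 ≤ h v) : 0 < L h :=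
  Finset.prod_pos (fun v _ => hpos v)

lemma dpos (hpos : ∀ v, 1 ≤ h v) (v : Fin n) : 0 < d h v :=
  Nat.div_pos (Nat.le_of_dvd (Lpos h hpos) (Finset.dvd_prod_of_mem h (mem_univ v))) (hpos v)

lemma Tsucc (k : ℕ) (hk : k < n) : T h (k + 1) = T h k + d h ⟨k, hk⟩ := by
  simp [T, Finset.sum_range_succ, hk]

lemma Tn : T h n = ∑ v, d h v := by
  rw [T, ← Fin.sum_univ_eq_sum_range]
  exact Finset.sum_congr rfl fun v _ => by simp

lemma cover (S : ℕ) (hS : S < T h n) :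
    ∃ v : Fin n, T h v.val ≤ S ∧ S < T h v.val + d h v := by
  have key : ∀ m, m ≤ n → S < T h m →
      ∃ v : Fin n, T h v.val ≤ S ∧ S < T h v.val + d h v := by
    intro m
    induction m with
    | zero => intro _ hS0; simp [T] at hS0
    | succ k ih =>
      intro hk hS1
      by_cases hx : S < T h k
      · exact ih (by omega) hx
      · push_neg at hx
        have hkn : k < n := by omega
        refine ⟨⟨k, hkn⟩, hx, ?_⟩
        rw [← Tsucc h k hkn] ; exact hS1
  exact key n le_rfl hS

lemma uniq_aux (hpos : ∀ v, 1 ≤ h v) (v : Fin n) (r g1 g2 : ℕ) (hg2 : g2 < h v)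
    (hle : g1 ≤ g2) (h1 : cond h v r g1) (h2 : cond h v r g2) : g1 = g2 := by
  obtain ⟨h11, h12⟩ := h1
  obtain ⟨h21, h22⟩ := h2
  set D := d h v with hD
  set x1 := (r + g1 * D) % L h with hx1
  set x2 := (r + g2 * D) % L h with hx2
  have hdL : D ∣ L h := Dvd.intro_left (h v) (hmul h v)
  have hDpos : 0 < D := dpos h hpos v
  have hm1 : x1 % D = r % D := by
    rw [hx1, Nat.mod_mod_of_dvd _ hdL, Nat.add_mul_mod_self_right]
  have hm2 : x2 % D = r % D := by
    rw [hx2, Nat.mod_mod_of_dvd _ hdL, Nat.add_mul_mod_self_right]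
  have heq : x1 = x2 := by
    rcases le_total x1 x2 with hc | hc
    · have hd2 : D ∣ x2 - x1 := (Nat.modEq_iff_dvd' hc).mp (hm1.trans hm2.symm)
      have hlt : x2 - x1 < D := by omega
      rcases Nat.eq_zero_or_pos (x2 - x1) with h0 | h0
      · omega
      · exact absurd (Nat.le_of_dvd h0 hd2) (by omega)
    · have hd2 : D ∣ x1 - x2 := (Nat.modEq_iff_dvd' hc).mp (hm2.trans hm1.symm)
      rcases Nat.eq_zero_or_pos (x1 - x2) with h0 | h0
      · omega
      · exact absurd (Nat.le_of_dvd h0 hd2) (by omega)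
  have hle' : r + g1 * D ≤ r + g2 * D :=
    Nat.add_le_add_left (Nat.mul_le_mul_right _ hle) r
  have hdvdL : L h ∣ (r + g2 * D) - (r + g1 * D) :=
    (Nat.modEq_iff_dvd' hle').mp heq
  have h3 : (r + g2 * D) - (r + g1 * D) = (g2 - g1) * D := by
    rw [Nat.sub_mul]; omega
  rw [h3] at hdvdL
  have h4 : (g2 - g1) * D < L h := by
    rw [← hmul h v]
    exact (Nat.mul_lt_mul_right hDpos).mpr (by omega)
  have h5 : (g2 - g1) * D = 0 := Nat.eq_zero_of_dvd_of_lt hdvdL h4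
  have : g2 - g1 = 0 := by
    rcases Nat.mul_eq_zero.mp h5 with h6 | h6
    · exact h6
    · omega
  omega

lemma uniq (hpos : ∀ v, 1 ≤ h v) (v : Fin n) (r : ℕ) (g1 g2 : Fin (h v))
    (h1 : cond h v r g1) (h2 : cond h v r g2) : g1 = g2 := by
  rcases le_total (g1 : ℕ) (g2 : ℕ) with hc | hc
  · exact Fin.ext (uniq_aux h hpos v r _ _ g2.isLt hc h1 h2)
  · exact (Fin.ext (uniq_aux h hpos v r _ _ g1.isLt hc h2 h1)).symm

open Classical in
/-- The strategy: guess the color that puts the total weighted sum into your interval. -/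
noncomputable def strat (hpos : ∀ v, 1 ≤ h v) (v : Fin n)
    (c : ∀ u : Fin n, Fin (h u)) : Fin (h v) :=
  if H : ∃ g : Fin (h v), cond h v (R h v c) g then H.choose else ⟨0, hpos v⟩

lemma d_cast (hpos : ∀ v, 1 ≤ h v) (v : Fin n) :
    (d h v : ℚ) = (L h : ℚ) / (h v : ℚ) := by
  have hv : (h v : ℚ) ≠ 0 := Nat.cast_ne_zero.mpr (by have := hpos v; omega)
  rw [eq_div_iff hv, mul_comm]
  exact_mod_cast hmul h v

lemma sum_d (hpos : ∀ v, 1 ≤ h v) (hsum : 1 ≤ ∑ v : Fin n, (1 : ℚ) / (h v : ℚ)) :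
    L h ≤ ∑ v, d h v := by
  have hL : (0 : ℚ) < (L h : ℚ) := by exact_mod_cast Lpos h hpos
  have key : (L h : ℚ) ≤ ∑ v, (d h v : ℚ) := by
    calc (L h : ℚ) = (L h : ℚ) * 1 := by ring
    _ ≤ (L h : ℚ) * ∑ v : Fin n, (1 : ℚ) / (h v : ℚ) := by
        exact mul_le_mul_of_nonneg_left hsum (le_of_lt hL)
    _ = ∑ v, (d h v : ℚ) := by
        rw [Finset.mul_sum]
        exact Finset.sum_congr rfl fun v _ => by
          rw [d_cast h hpos v]; ring
  exact_mod_cast key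

end HatsK

/-- The Hats game on the complete graph `K_n` with hatness function `h` (each sage sees
all others' hats) is winning iff `∑ 1/h(v) ≥ 1`. A strategy assigns to each sage a guess
depending only on the other sages' hat colors. -/
theorem hats_complete_win_iff (n : ℕ) (h : Fin n → ℕ) (hpos : ∀ v, 1 ≤ h v) :
    (∃ s : ∀ v : Fin n, (∀ u : Fin n, Fin (h u)) → Fin (h v),
      (∀ (v : Fin n) (c c' : ∀ u : Fin n, Fin (h u)),
          (∀ u, u ≠ v → c u = c' u) → s v c = s v c') ∧
        ∀ c : ∀ u : Fin n, Fin (h u), ∃ v, s v c = c v) ↔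
      1 ≤ ∑ v : Fin n, (1 : ℚ) / (h v : ℚ) := by
  classical
  constructor
  · -- winning strategy ⇒ sum ≥ 1, by counting
    rintro ⟨s, hloc, hwin⟩
    set A : Fin n → Finset (∀ u : Fin n, Fin (h u)) :=
      fun v => Finset.univ.filter (fun c => s v c = c v) with hA
    have hP : Fintype.card (∀ u : Fin n, Fin (h u)) = HatsK.L h := by
      simp [HatsK.L, Fintype.card_pi]
    -- each A v has card * h v ≤ L
    have hcard : ∀ v, (A v).card * h v ≤ HatsK.L h := by
      intro v
      have hinj : ((A v) ×ˢ (Finset.univ : Finset (Fin (h v)))).card ≤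
          (Finset.univ : Finset (∀ u : Fin n, Fin (h u))).card := by
        apply Finset.card_le_card_of_injOn (fun p => Function.update p.1 v p.2)
        · intro p _; exact Finset.mem_univ _
        · rintro ⟨c, k⟩ hp ⟨c', k'⟩ hp' hEq
          simp only [Finset.coe_product, Set.mem_prod, Finset.mem_coe] at hp hp'
          have hAc : s v c = c v := (Finset.mem_filter.mp hp.1).2
          have hAc' : s v c' = c' v := (Finset.mem_filter.mp hp'.1).2
          have hoff : ∀ u, u ≠ v → c u = c' u := by
            intro u hu
            have := congrFun hEq u
            simpa [Function.update_of_ne hu] using this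
          have hcv : c v = c' v := by
            rw [← hAc, ← hAc']; exact hloc v c c' hoff
          have hc : c = c' := funext fun u => by
            by_cases hu : u = v
            · subst hu; exact hcv
            · exact hoff u hu
          have hk : k = k' := by
            have := congrFun hEq v
            rw [hc] at this
            simpa using this
          simp [hc, hk]
      rw [Finset.card_product, Finset.card_univ, Finset.card_univ, Fintype.card_fin,
        hP] at hinj
      exact hinj
    -- the sets A v cover everything
    have hcover : (Finset.univ : Finset (∀ u : Fin n, Fin (h u))) ⊆
        Finset.univ.biUnion A := by
      intro c _
      obtain ⟨v, hv⟩ := hwin c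
      exact Finset.mem_biUnion.mpr ⟨v, Finset.mem_univ v,
        Finset.mem_filter.mpr ⟨Finset.mem_univ c, hv⟩⟩
    have hLle : HatsK.L h ≤ ∑ v, (A v).card := by
      calc HatsK.L h = (Finset.univ : Finset (∀ u : Fin n, Fin (h u))).card := by
            rw [Finset.card_univ, hP]
        _ ≤ (Finset.univ.biUnion A).card := Finset.card_le_card hcover
        _ ≤ ∑ v, (A v).card := Finset.card_biUnion_le
    -- transfer to ℚ
    have hLpos : (0 : ℚ) < (HatsK.L h : ℚ) := by exact_mod_cast HatsK.Lpos h hpos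
    have h1 : (HatsK.L h : ℚ) ≤ ∑ v, ((A v).card : ℚ) := by exact_mod_cast hLle
    have h2 : ∀ v, ((A v).card : ℚ) ≤ (HatsK.L h : ℚ) * ((1 : ℚ) / (h v : ℚ)) := by
      intro v
      have hv : (0 : ℚ) < (h v : ℚ) := by
        exact_mod_cast Nat.lt_of_lt_of_le Nat.zero_lt_one (hpos v)
      rw [mul_one_div, le_div_iff₀ hv]
      exact_mod_cast hcard v
    have h3 : (HatsK.L h : ℚ) ≤ (HatsK.L h : ℚ) * ∑ v : Fin n, (1 : ℚ) / (h v : ℚ) := by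
      calc (HatsK.L h : ℚ) ≤ ∑ v, ((A v).card : ℚ) := h1
        _ ≤ ∑ v, (HatsK.L h : ℚ) * ((1 : ℚ) / (h v : ℚ)) :=
            Finset.sum_le_sum fun v _ => h2 v
        _ = (HatsK.L h : ℚ) * ∑ v : Fin n, (1 : ℚ) / (h v : ℚ) := by
            rw [Finset.mul_sum]
    nlinarith
  · -- sum ≥ 1 ⇒ winning strategy
    intro hsum
    refine ⟨HatsK.strat h hpos, ?_, ?_⟩
    · intro v c c' hcc'
      have hR : HatsK.R h v c = HatsK.R h v c' := by
        apply Finset.sum_congr rfl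
        intro u hu
        rw [hcc' u (Finset.mem_erase.mp hu).1]
      simp only [HatsK.strat, hR]
    · intro c
      set S := (∑ u, (c u : ℕ) * HatsK.d h u) % HatsK.L h with hS
      have hSlt : S < HatsK.T h n := by
        have h1 : S < HatsK.L h := Nat.mod_lt _ (HatsK.Lpos h hpos)
        have h2 : HatsK.L h ≤ ∑ v, HatsK.d h v := HatsK.sum_d h hpos hsum
        rw [HatsK.Tn h]
        omega
      obtain ⟨v, hv1, hv2⟩ := HatsK.cover h S hSlt
      refine ⟨v, ?_⟩
      have htot : HatsK.R h v c + (c v : ℕ) * HatsK.d h v = ∑ u, (c u : ℕ) * HatsK.d h u :=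
        Finset.sum_erase_add _ _ (Finset.mem_univ v)
      have hcond : HatsK.cond h v (HatsK.R h v c) (c v) := by
        constructor
        · rw [htot]; exact hv1
        · rw [htot]; exact hv2
      have H : ∃ g : Fin (h v), HatsK.cond h v (HatsK.R h v c) g := ⟨c v, hcond⟩
      rw [HatsK.strat, dif_pos H]
      exact HatsK.uniq h hpos v _ _ _ H.choose_spec hcond
end

section
/- In the generalized hat guessing game on the complete graph K_n with hatness function h and guessing function g (each sage v makes g(v) simultaneous guesses out of h(v) colors), the sages have a winning strategy if and only if ∑_{v ∈ V} g(v)/h(v) ≥ 1. -/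
set_option maxHeartbeats 1000000

open Finset

private lemma count_fract_le (H g : ℕ) (t L : ℚ) (hHL : (H : ℚ) * L ≤ (g : ℚ)) :
    (Finset.univ.filter fun j : Fin H =>
      Int.fract (t + ((j : ℕ) : ℚ) / (H : ℚ)) < L).card ≤ g := by
  classical
  rcases Nat.eq_zero_or_pos H with hH | hH
  · subst hH; simp
  have hH0 : (0 : ℚ) < (H : ℚ) := by exact_mod_cast hH
  set f : Fin H → ℤ := fun j => (j : ℤ) - H * ⌊t + ((j : ℕ) : ℚ) / H⌋ with hf
  have hmaps : ∀ j ∈ Finset.univ.filter (fun j : Fin H =>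
      Int.fract (t + ((j : ℕ) : ℚ) / H) < L),
      f j ∈ Finset.Ico ⌈-((H : ℚ) * t)⌉ ⌈(H : ℚ) * L - (H : ℚ) * t⌉ := by
    intro j hj
    rw [Finset.mem_filter] at hj
    obtain ⟨-, hj⟩ := hj
    have h0 : (0:ℚ) ≤ Int.fract (t + ((j : ℕ) : ℚ) / H) := Int.fract_nonneg _
    rw [Int.fract] at hj h0
    set k : ℤ := ⌊t + ((j : ℕ) : ℚ) / H⌋ with hk
    have hexp : (H : ℚ) * (t + ((j : ℕ) : ℚ) / H - k) = H * t + (j : ℕ) - H * k := by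
      field_simp
    have e1 : (0:ℚ) ≤ H * t + (j : ℕ) - H * k := by
      have := mul_le_mul_of_nonneg_left h0 hH0.le
      rw [mul_zero] at this; linarith [hexp ▸ this]
    have e2 : (H:ℚ) * t + (j : ℕ) - H * k < H * L := by
      have := (mul_lt_mul_iff_right₀ hH0).mpr hj
      linarith [hexp ▸ this]
    rw [Finset.mem_Ico]
    constructor
    · rw [Int.ceil_le]
      push_cast [hf]
      linarith
    · rw [Int.lt_ceil]
      push_cast [hf]
      linarith
  have hinj : Set.InjOn f (Finset.univ.filter fun j : Fin H =>
      Int.fract (t + ((j : ℕ) : ℚ) / H) < L) := by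
    intro j _ j' _ heq
    simp only [hf] at heq
    have hd : (H : ℤ) ∣ ((j : ℤ) - (j' : ℤ)) :=
      ⟨⌊t + ((j : ℕ) : ℚ) / H⌋ - ⌊t + ((j' : ℕ) : ℚ) / H⌋, by linarith [heq]⟩
    have habs : |((j : ℤ) - (j' : ℤ))| < (H : ℤ) := by
      have h1 := j.isLt; have h2 := j'.isLt
      rw [abs_lt]; omega
    have := Int.eq_zero_of_abs_lt_dvd hd habs
    have : (j : ℕ) = (j' : ℕ) := by omega
    exact Fin.ext this
  calc (Finset.univ.filter fun j : Fin H =>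
      Int.fract (t + ((j : ℕ) : ℚ) / H) < L).card
      ≤ (Finset.Ico ⌈-((H : ℚ) * t)⌉ ⌈(H : ℚ) * L - (H : ℚ) * t⌉).card :=
        Finset.card_le_card_of_injOn f hmaps hinj
    _ ≤ g := by
        rw [Int.card_Ico]
        have hc : ⌈(H : ℚ) * L - (H : ℚ) * t⌉ ≤ ⌈-((H : ℚ) * t)⌉ + g := by
          have h1 : (H : ℚ) * L - (H : ℚ) * t ≤ -((H : ℚ) * t) + (g : ℤ) := by
            push_cast; linarith
          calc ⌈(H : ℚ) * L - (H : ℚ) * t⌉ ≤ ⌈-((H : ℚ) * t) + ((g:ℤ) : ℚ)⌉ :=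
                Int.ceil_le_ceil h1
            _ = ⌈-((H : ℚ) * t)⌉ + g := Int.ceil_add_intCast _ _
        omega


/-- The generalized hat guessing game on the complete graph `K_n` with hatness `h` and
guessing function `g` (each sage `v` simultaneously makes `g v` guesses out of `h v`
colors, seeing all other sages' hats) is winning iff `∑ g(v)/h(v) ≥ 1`. -/
theorem hats_complete_multiguess_win_iff (n : ℕ) (h g : Fin n → ℕ) (hpos : ∀ v, 1 ≤ h v) :
    (∃ s : ∀ v : Fin n, (∀ u : Fin n, Fin (h u)) → Finset (Fin (h v)),
      (∀ (v : Fin n) (c : ∀ u : Fin n, Fin (h u)), (s v c).card ≤ g v) ∧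
      (∀ (v : Fin n) (c c' : ∀ u : Fin n, Fin (h u)),
          (∀ u, u ≠ v → c u = c' u) → s v c = s v c') ∧
        ∀ c : ∀ u : Fin n, Fin (h u), ∃ v, c v ∈ s v c) ↔
      1 ≤ ∑ v : Fin n, (g v : ℚ) / (h v : ℚ) := by
  constructor
  · rintro ⟨s, hcard, hdep, hwin⟩
    set P : Fin n → ℕ := fun v => ∏ u ∈ univ.erase v, h u with hP
    have hNP : ∀ v : Fin n, ∏ u, h u = h v * P v := fun v =>
      (Finset.mul_prod_erase univ h (mem_univ v)).symm
    have hbound : ∀ v : Fin n, (univ.filter fun c : ∀ u, Fin (h u) => c v ∈ s v c).card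
        ≤ g v * P v := by
      intro v
      set f : (∀ u, Fin (h u)) → (∀ u : {u : Fin n // u ≠ v}, Fin (h u.1)) :=
        fun c u => c u.1 with hf
      have hfiber : ∀ d ∈ (univ.filter fun c : ∀ u, Fin (h u) => c v ∈ s v c).image f,
          ((univ.filter fun c : ∀ u, Fin (h u) => c v ∈ s v c).filter
            fun c => f c = d).card ≤ g v := by
        intro d hd
        obtain ⟨c₀, hc₀s, hc₀⟩ := Finset.mem_image.mp hd
        have hmap : ∀ c ∈ (univ.filter fun c : ∀ u, Fin (h u) => c v ∈ s v c).filter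
            (fun c => f c = d), c v ∈ s v c₀ := by
          intro c hc
          simp only [Finset.mem_filter, Finset.mem_univ, true_and] at hc
          obtain ⟨hwc, hfc⟩ := hc
          have hss : s v c = s v c₀ := by
            refine hdep v c c₀ fun u hu => ?_
            have h1 : f c ⟨u, hu⟩ = f c₀ ⟨u, hu⟩ := by rw [hfc, hc₀]
            exact h1
          rwa [← hss]
        have hinj : Set.InjOn (fun c : ∀ u, Fin (h u) => c v)
            ((univ.filter fun c : ∀ u, Fin (h u) => c v ∈ s v c).filter
              fun c => f c = d) := by
          intro c hc c' hc' hcc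
          simp only [Finset.coe_filter, Finset.mem_filter, Finset.mem_univ, true_and,
            Set.mem_setOf_eq] at hc hc'
          funext u
          by_cases hu : u = v
          · subst hu; exact hcc
          · exact congrFun (hc.2.trans hc'.2.symm) ⟨u, hu⟩
        exact (Finset.card_le_card_of_injOn _ hmap hinj).trans (hcard v c₀)
      have himg : ((univ.filter fun c : ∀ u, Fin (h u) => c v ∈ s v c).image f).card ≤ P v := by
        refine (Finset.card_le_card (Finset.subset_univ _)).trans ?_
        rw [Finset.card_univ]
        have h1 : Fintype.card (∀ u : {u : Fin n // u ≠ v}, Fin (h u.1))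
            = ∏ u : {u : Fin n // u ≠ v}, h u.1 := by
          simp [Fintype.card_pi]
        rw [h1, hP]
        rw [← Finset.prod_subtype (univ.erase v) (fun x => by simp) (fun u => h u)]
      calc (univ.filter fun c : ∀ u, Fin (h u) => c v ∈ s v c).card
          ≤ g v * ((univ.filter fun c : ∀ u, Fin (h u) => c v ∈ s v c).image f).card :=
            Finset.card_le_mul_card_image (f := f) _ (g v) hfiber
        _ ≤ g v * P v := Nat.mul_le_mul_left _ himg
    have key : ∏ v, h v ≤ ∑ v, g v * P v := by
      have cover : (univ : Finset (∀ u, Fin (h u))) ⊆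
          univ.biUnion fun v => univ.filter fun c => c v ∈ s v c := by
        intro c _
        obtain ⟨v, hv⟩ := hwin c
        exact Finset.mem_biUnion.mpr ⟨v, mem_univ _, Finset.mem_filter.mpr ⟨mem_univ _, hv⟩⟩
      calc ∏ v, h v = Fintype.card (∀ u, Fin (h u)) := by simp [Fintype.card_pi]
        _ = (univ : Finset (∀ u, Fin (h u))).card := Finset.card_univ.symm
        _ ≤ (univ.biUnion fun v => univ.filter fun c => c v ∈ s v c).card :=
            Finset.card_le_card cover
        _ ≤ ∑ v, (univ.filter fun c => c v ∈ s v c).card := Finset.card_biUnion_le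
        _ ≤ ∑ v, g v * P v := Finset.sum_le_sum fun v _ => hbound v
    -- arithmetic
    have hNpos : 0 < ∏ v, h v := Finset.prod_pos fun v _ => hpos v
    have hNq : (0:ℚ) < ((∏ v, h v : ℕ) : ℚ) := by exact_mod_cast hNpos
    have hkeyq : ((∏ v, h v : ℕ) : ℚ) ≤ ((∑ v, g v * P v : ℕ) : ℚ) := by exact_mod_cast key
    have hterm : ∀ v : Fin n, ((g v * P v : ℕ) : ℚ) / ((∏ u, h u : ℕ) : ℚ)
        = (g v : ℚ) / (h v : ℚ) := by
      intro v
      rw [hNP v]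
      have hPv : ((P v : ℕ) : ℚ) ≠ 0 := by
        have : 0 < P v := Finset.prod_pos fun u _ => hpos u
        exact_mod_cast this.ne'
      push_cast
      rw [mul_div_mul_right _ _ hPv]
    calc (1:ℚ) = ((∏ v, h v : ℕ) : ℚ) / ((∏ v, h v : ℕ) : ℚ) := (div_self hNq.ne').symm
      _ ≤ ((∑ v, g v * P v : ℕ) : ℚ) / ((∏ v, h v : ℕ) : ℚ) := by
          gcongr
      _ = ∑ v, ((g v * P v : ℕ) : ℚ) / ((∏ u, h u : ℕ) : ℚ) := by
          push_cast
          rw [Finset.sum_div]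
      _ = ∑ v, (g v : ℚ) / (h v : ℚ) := Finset.sum_congr rfl fun v _ => hterm v
  · intro hsum
    classical
    set r : Fin n → ℚ := fun v => (g v : ℚ) / (h v : ℚ) with hr
    set A : ℕ → ℚ := fun k => min 1 (∑ u ∈ univ.filter (fun u : Fin n => (u : ℕ) < k), r u)
      with hA
    have hr0 : ∀ v, 0 ≤ r v := fun v => div_nonneg (Nat.cast_nonneg _) (Nat.cast_nonneg _)
    have hhq : ∀ v : Fin n, (0:ℚ) < (h v : ℚ) := fun v => by exact_mod_cast hpos v
    have hA0 : A 0 = 0 := by simp [hA]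
    have hAnn : ∀ k, 0 ≤ A k := fun k =>
      le_min zero_le_one (Finset.sum_nonneg fun u _ => hr0 u)
    have hAn : A n = 1 := by
      have hfil : univ.filter (fun u : Fin n => (u : ℕ) < n) = univ :=
        Finset.filter_true_of_mem fun u _ => u.isLt
      rw [hA]
      simp only [hfil]
      exact min_eq_left hsum
    have hstep : ∀ v : Fin n, A ((v : ℕ) + 1) ≤ A (v : ℕ) + r v := by
      intro v
      have hins : univ.filter (fun u : Fin n => (u : ℕ) < (v : ℕ) + 1)
          = insert v (univ.filter fun u : Fin n => (u : ℕ) < (v : ℕ)) := by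
        ext u
        simp only [Finset.mem_filter, Finset.mem_insert, Finset.mem_univ, true_and, Fin.ext_iff]
        omega
      have hvnot : v ∉ univ.filter fun u : Fin n => (u : ℕ) < (v : ℕ) := by simp
      rw [hA]
      simp only [hins, Finset.sum_insert hvnot]
      set S := ∑ u ∈ univ.filter (fun u : Fin n => (u : ℕ) < (v : ℕ)), r u with hS
      calc min 1 (r v + S) ≤ min (1 + r v) (S + r v) :=
            min_le_min (by linarith [hr0 v]) (by linarith)
        _ = min 1 S + r v := min_add_add_right 1 S (r v)
    refine ⟨fun v c => univ.filter fun j : Fin (h v) =>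
        Int.fract ((∑ u ∈ univ.erase v, ((c u : ℕ) : ℚ) / (h u : ℚ)) - A (v : ℕ)
          + ((j : ℕ) : ℚ) / (h v : ℚ)) < A ((v : ℕ) + 1) - A (v : ℕ), ?_, ?_, ?_⟩
    · intro v c
      apply count_fract_le
      have h1 : A ((v : ℕ) + 1) - A (v : ℕ) ≤ r v := by linarith [hstep v]
      calc (h v : ℚ) * (A ((v : ℕ) + 1) - A (v : ℕ)) ≤ (h v : ℚ) * r v := by
            apply mul_le_mul_of_nonneg_left h1 (hhq v).le
        _ = g v := by rw [hr]; have hne := (hhq v).ne'; field_simp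
    · intro v c c' hcc'
      have hx : ∑ u ∈ univ.erase v, ((c u : ℕ) : ℚ) / (h u : ℚ)
          = ∑ u ∈ univ.erase v, ((c' u : ℕ) : ℚ) / (h u : ℚ) :=
        Finset.sum_congr rfl fun u hu => by rw [hcc' u (Finset.mem_erase.mp hu).1]
      dsimp only
      rw [hx]
    · intro c
      have hn : 0 < n := by
        by_contra hn0
        push_neg at hn0
        have hzero : n = 0 := by omega
        subst hzero
        simp only [Finset.univ_eq_empty, Finset.sum_empty] at hsum
        linarith
      set Sq : ℚ := ∑ u, ((c u : ℕ) : ℚ) / (h u : ℚ) with hSq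
      set T : ℚ := Int.fract Sq with hT
      have hT0 : 0 ≤ T := Int.fract_nonneg _
      have hT1 : T < 1 := Int.fract_lt_one _
      have hex : ∃ v : Fin n, A (v : ℕ) ≤ T ∧ T < A ((v : ℕ) + 1) := by
        by_contra hcon
        push_neg at hcon
        have hall : ∀ k, k ≤ n → A k ≤ T := by
          intro k
          induction k with
          | zero => intro _; rw [hA0]; exact hT0
          | succ m ih =>
            intro hk
            have hm : m < n := hk
            exact hcon ⟨m, hm⟩ (ih (Nat.le_of_lt hm))
        have := hall n le_rfl
        rw [hAn] at this
        linarith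
      obtain ⟨v, hv1, hv2⟩ := hex
      refine ⟨v, ?_⟩
      simp only [Finset.mem_filter, Finset.mem_univ, true_and]
      have hsplit : ((c v : ℕ) : ℚ) / (h v : ℚ)
          + (∑ u ∈ univ.erase v, ((c u : ℕ) : ℚ) / (h u : ℚ)) = Sq :=
        Finset.add_sum_erase univ (fun u => ((c u : ℕ) : ℚ) / (h u : ℚ)) (mem_univ v)
      have he : (∑ u ∈ univ.erase v, ((c u : ℕ) : ℚ) / (h u : ℚ)) - A (v : ℕ)
          + ((c v : ℕ) : ℚ) / (h v : ℚ) = (T - A (v : ℕ)) + (⌊Sq⌋ : ℚ) := by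
        have hfr : T = Sq - ⌊Sq⌋ := by rw [hT]; exact (Int.self_sub_floor Sq).symm
        linarith
      rw [he, Int.fract_add_intCast]
      rw [Int.fract_eq_self.mpr ⟨by linarith, by linarith [hAnn (v : ℕ)]⟩]
      linarith
end

section
/- Define polynomials A_n(k) by A_0 = 1, A_1 = k, and A_n = k(A_{n−1} + A_{n−2}) for n ≥ 2. Then for every n, every real root of A_n lies in the interval [−4, 0]. -/
/-- The polynomials `A_n(k)`: `A_0 = 1`, `A_1 = k`, `A_n = k(A_{n−1} + A_{n−2})`,
viewed as real functions of `k`. -/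
def A : ℕ → ℝ → ℝ
  | 0, _ => 1
  | 1, k => k
  | (n + 2), k => k * (A (n + 1) k + A n k)

lemma A_pos_of_pos (k : ℝ) (hk : 0 < k) : ∀ n, 0 < A n k ∧ 0 < A (n + 1) k := by
  intro n
  induction n with
  | zero => exact ⟨by norm_num [A], by simpa [A] using hk⟩
  | succ n ih =>
    refine ⟨ih.2, ?_⟩
    show 0 < k * (A (n + 1) k + A n k)
    have := ih.1; have := ih.2
    positivity

lemma A_alt_of_lt (k : ℝ) (hk : k < -4) :
    ∀ n, 0 < (-1 : ℝ) ^ n * A n k ∧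
      2 * ((-1 : ℝ) ^ n * A n k) ≤ (-1 : ℝ) ^ (n + 1) * A (n + 1) k := by
  intro n
  induction n with
  | zero => constructor <;> simp [A] <;> linarith
  | succ n ih =>
    obtain ⟨h1, h2⟩ := ih
    set a := (-1 : ℝ) ^ n * A n k with ha
    have hb : (-1 : ℝ) ^ (n + 1) * A (n + 1) k = -((-1 : ℝ) ^ n * A (n + 1) k) := by
      rw [pow_succ]; ring
    set b := (-1 : ℝ) ^ (n + 1) * A (n + 1) k with hbdef
    have hbpos : 0 < b := by linarith
    refine ⟨hbpos, ?_⟩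
    have hA2 : A (n + 2) k = k * (A (n + 1) k + A n k) := rfl
    have key : (-1 : ℝ) ^ (n + 2) * A (n + 2) k = -k * (b - a) := by
      simp only [hA2, ha, hbdef]; ring
    rw [key]
    nlinarith [mul_pos (show (0:ℝ) < -k - 4 by linarith) (show (0:ℝ) < b - a by linarith)]

/-- Every real root of `A_n` lies in the interval `[−4, 0]`. -/
theorem A_real_roots_mem_Icc (n : ℕ) (k : ℝ) (h : A n k = 0) :
    k ∈ Set.Icc (-4 : ℝ) 0 := by
  constructor
  · by_contra hlt
    push_neg at hlt
    have := (A_alt_of_lt k (by linarith) n).1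
    rw [h] at this
    simp at this
  · by_contra hlt
    push_neg at hlt
    have := (A_pos_of_pos k hlt n).1
    rw [h] at this
    exact lt_irrefl 0 this
end

section
/- Define A_n(k) by A_0 = 1, A_1 = k, A_n = k(A_{n−1} + A_{n−2}), and define B_n = (k+2)A_{n−1} + k·A_{n−2} (n ≥ 3) and L_n = (k+2)B_{n−1} + k·B_{n−2} (n ≥ 4). Then k·L_n = (k+4)·A_n for all n ≥ 4, i.e. L_n = A_n + 4A_{n−1} + 4A_{n−2}. -/
/-- `B_n = (k+2)A_{n−1} + k·A_{n−2}`. -/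
def B (n : ℕ) (k : ℝ) : ℝ := (k + 2) * A (n - 1) k + k * A (n - 2) k

/-- `L_n = (k+2)B_{n−1} + k·B_{n−2}`. -/
def L (n : ℕ) (k : ℝ) : ℝ := (k + 2) * B (n - 1) k + k * B (n - 2) k

lemma A_rec (n : ℕ) (k : ℝ) : A (n + 2) k = k * (A (n + 1) k + A n k) := rfl

/-- For `n ≥ 4`: `k·L_n = (k+4)·A_n`, i.e. `L_n = A_n + 4A_{n−1} + 4A_{n−2}`. -/
theorem L_eq (n : ℕ) (hn : 4 ≤ n) (k : ℝ) :
    k * L n k = (k + 4) * A n k ∧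
      L n k = A n k + 4 * A (n - 1) k + 4 * A (n - 2) k := by
  obtain ⟨m, rfl⟩ := Nat.exists_eq_add_of_le hn
  have h1 : 4 + m - 1 = m + 3 := by omega
  have h2 : 4 + m - 2 = m + 2 := by omega
  have h3 : m + 3 - 1 = m + 2 := by omega
  have h4 : m + 3 - 2 = m + 1 := by omega
  have h5 : m + 2 - 1 = m + 1 := by omega
  have h6 : m + 2 - 2 = m := by omega
  have h7 : 4 + m = m + 4 := by omega
  rw [L, B, B, h1, h2, h3, h4, h5, h6, h7]
  simp only [show m + 4 = (m + 2) + 2 from rfl, A_rec]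
  constructor <;> ring
end

section
/- Let G be a graph, G(a_1, …, a_n) its clique extension of the first kind with all a_i > 1, and f_n(a_1, …, a_n) the number of n-element independent sets in G(a_1, …, a_n), extended as a multilinear polynomial. Then the univariate signed independence polynomial of G itself satisfies U_G(x) = (−x)^n · f_n(1 − 1/x, …, 1 − 1/x) for x ≠ 0. -/
/-- The clique extension of the first kind of a graph `G` on `Fin n`: each vertex `i`
is glued to a clique `K_{a i}` sharing the vertex `(i, 0)`. -/
def cliqueExt {n : ℕ} (G : SimpleGraph (Fin n)) (a : Fin n → ℕ) :
    SimpleGraph ((i : Fin n) × Fin (a i)) where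
  Adj p q := p ≠ q ∧ (p.1 = q.1 ∨ (p.2.val = 0 ∧ q.2.val = 0 ∧ G.Adj p.1 q.1))
  symm := by
    constructor
    rintro p q ⟨hne, h⟩
    refine ⟨hne.symm, ?_⟩
    rcases h with h | ⟨h1, h2, h3⟩
    · exact Or.inl h.symm
    · exact Or.inr ⟨h2, h1, h3.symm⟩
  loopless := by constructor; rintro p ⟨hne, -⟩; exact hne rfl

open scoped Classical in
/-- The number of independent sets of size `m` in a graph. -/
noncomputable def numIndep {W : Type*} [Fintype W] (G : SimpleGraph W) (m : ℕ) : ℕ :=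
  (Finset.univ.powerset.filter
      (fun I : Finset W => I.card = m ∧ ∀ u ∈ I, ∀ w ∈ I, u ≠ w → ¬ G.Adj u w)).card

open scoped Classical in
/-- The univariate signed independence polynomial
`U_G(x) = ∑_{I independent} (−x)^{|I|}`. -/
noncomputable def uPoly {W : Type*} [Fintype W] (G : SimpleGraph W) (x : ℝ) : ℝ :=
  ∑ I ∈ Finset.univ.powerset.filter
      (fun I : Finset W => ∀ u ∈ I, ∀ w ∈ I, u ≠ w → ¬ G.Adj u w),
    (-x) ^ I.card

open MvPolynomial in
lemma grid_zero : ∀ {n : ℕ} (f : MvPolynomial (Fin n) ℝ),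
    (∀ a : Fin n → ℕ, (∀ i, 1 < a i) → MvPolynomial.eval (fun i => (a i : ℝ)) f = 0) → f = 0 := by
  intro n
  induction n with
  | zero =>
    intro f h
    obtain ⟨r, rfl⟩ := MvPolynomial.C_surjective (Fin 0) f
    have := h (fun i => 2) (fun i => i.elim0)
    simpa using this
  | succ n ih =>
    intro f h
    have key : ∀ k, (finSuccEquiv ℝ n f).coeff k = 0 := by
      intro k
      apply ih
      intro a ha
      have hψ : Polynomial.map (eval fun i => (a i : ℝ)) (finSuccEquiv ℝ n f) = 0 := by
        apply Polynomial.eq_zero_of_infinite_isRoot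
        apply Set.Infinite.mono (s := (fun m : ℕ => (m : ℝ)) '' {m | 2 ≤ m})
        · rintro _ ⟨m, hm, rfl⟩
          have := h (Fin.cons m a) (by
            intro i
            refine Fin.cases ?_ ?_ i
            · simpa using Nat.lt_of_lt_of_le one_lt_two (by simpa using hm : 2 ≤ m)
            · intro j; simpa using ha j)
          rw [show (fun i => ((Fin.cons m a : Fin (n+1) → ℕ) i : ℝ)) =
              Fin.cons (m : ℝ) (fun i => (a i : ℝ)) from funext (Fin.cases rfl (fun j => by simp)),
            eval_eq_eval_mv_eval'] at this
          exact this
        · apply Set.Infinite.image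
          · intro x hx y hy hxy; exact Nat.cast_injective hxy
          · exact Set.Ici_infinite 2
      have := congrArg (fun p => Polynomial.coeff p k) hψ
      simpa [Polynomial.coeff_map] using this
    have hz : finSuccEquiv ℝ n f = 0 := Polynomial.ext fun k => by simp [key k]
    have := congrArg (finSuccEquiv ℝ n).symm hz
    simpa using this

open scoped Classical in
lemma count_key {n : ℕ} (G : SimpleGraph (Fin n)) (a : Fin n → ℕ) (ha : ∀ i, 1 < a i) :
    numIndep (cliqueExt G a) n =
      ∑ I ∈ Finset.univ.powerset.filter
          (fun I : Finset (Fin n) => ∀ u ∈ I, ∀ w ∈ I, u ≠ w → ¬ G.Adj u w),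
        ∏ i ∈ Iᶜ, (a i - 1) := by
  set V := (i : Fin n) × Fin (a i) with hV
  have sig : ∀ (q : V) (i : Fin n) (h : q.1 = i), (⟨i, h ▸ q.2⟩ : V) = q := by
    rintro ⟨j, v⟩ i h; cases h; rfl
  set S : Finset (∀ i, Fin (a i)) :=
    Finset.univ.filter
      (fun c => ∀ u w, G.Adj u w → ((c u).val ≠ 0 ∨ (c w).val ≠ 0)) with hS
  -- Step A : numIndep = S.card
  have stepA : numIndep (cliqueExt G a) n = S.card := by
    rw [numIndep]
    symm
    apply Finset.card_bij (fun c _ => Finset.univ.image (fun i => (⟨i, c i⟩ : V)))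
    · intro c hc
      simp only [hS, Finset.mem_filter, Finset.mem_univ, true_and] at hc
      simp only [Finset.mem_filter, Finset.mem_powerset]
      refine ⟨Finset.subset_univ _, ?_, ?_⟩
      · rw [Finset.card_image_of_injective _ (fun i j hij => congrArg Sigma.fst hij),
          Finset.card_univ, Fintype.card_fin]
      · intro u hu w hw huw hadj
        simp only [Finset.mem_image, Finset.mem_univ, true_and] at hu hw
        obtain ⟨i, rfl⟩ := hu; obtain ⟨j, rfl⟩ := hw
        obtain ⟨-, h | ⟨h1, h2, h3⟩⟩ := hadj
        · exact huw (by cases h; rfl)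
        · rcases hc i j h3 with h | h
          · exact h h1
          · exact h h2
    · intro c hc c' hc' heq
      funext i
      have : (⟨i, c i⟩ : V) ∈ Finset.univ.image (fun j => (⟨j, c' j⟩ : V)) :=
        heq ▸ Finset.mem_image_of_mem _ (Finset.mem_univ i)
      simp only [Finset.mem_image, Finset.mem_univ, true_and] at this
      obtain ⟨j, hj⟩ := this
      obtain ⟨rfl, h2⟩ := Sigma.mk.inj_iff.1 hj
      exact (eq_of_heq h2).symm
    · intro J hJ
      simp only [Finset.mem_filter, Finset.mem_powerset] at hJ
      obtain ⟨-, hcard, hind⟩ := hJ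
      have hfstinj : Set.InjOn Sigma.fst (J : Set V) := by
        intro u hu w hw h
        by_contra hne
        exact hind u hu w hw hne ⟨hne, Or.inl h⟩
      have himg : J.image Sigma.fst = Finset.univ := by
        apply Finset.eq_univ_of_card
        rw [Finset.card_image_of_injOn hfstinj, hcard, Fintype.card_fin]
      have hex : ∀ i : Fin n, ∃ p, p ∈ J ∧ p.1 = i := by
        intro i
        have : i ∈ J.image Sigma.fst := himg ▸ Finset.mem_univ i
        simp only [Finset.mem_image] at this
        obtain ⟨p, hp, hpi⟩ := this
        exact ⟨p, hp, hpi⟩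
      choose p hp hfst using hex
      set c : ∀ i, Fin (a i) := fun i => (hfst i) ▸ (p i).2 with hc
      have hpi : ∀ i, (⟨i, c i⟩ : V) = p i := fun i => sig (p i) i (hfst i)
      have hcS : c ∈ S := by
        simp only [hS, Finset.mem_filter, Finset.mem_univ, true_and]
        intro u w hadj
        by_contra hcon
        push_neg at hcon
        obtain ⟨h0u, h0w⟩ := hcon
        have hne : u ≠ w := hadj.ne
        have hmem_u : (⟨u, c u⟩ : V) ∈ J := (hpi u) ▸ hp u
        have hmem_w : (⟨w, c w⟩ : V) ∈ J := (hpi w) ▸ hp w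
        have hne' : (⟨u, c u⟩ : V) ≠ ⟨w, c w⟩ := fun h => hne (congrArg Sigma.fst h)
        exact hind _ hmem_u _ hmem_w hne' ⟨hne', Or.inr ⟨h0u, h0w, hadj⟩⟩
      refine ⟨c, hcS, ?_⟩
      apply Finset.eq_of_subset_of_card_le
      · intro q hq
        simp only [Finset.mem_image, Finset.mem_univ, true_and] at hq
        obtain ⟨i, rfl⟩ := hq
        exact (hpi i) ▸ hp i
      · rw [Finset.card_image_of_injective _ (fun i j hij => congrArg Sigma.fst hij),
          Finset.card_univ, Fintype.card_fin, hcard]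
  rw [stepA]
  -- Step B : fiberwise count
  rw [Finset.card_eq_sum_card_fiberwise
      (f := fun c => Finset.univ.filter (fun i => (c i).val = 0))
      (t := Finset.univ.powerset.filter
        (fun I : Finset (Fin n) => ∀ u ∈ I, ∀ w ∈ I, u ≠ w → ¬ G.Adj u w))
      (fun c hc => by
        simp only [hS, Finset.mem_coe, Finset.mem_filter, Finset.mem_univ, true_and] at hc
        simp only [Finset.mem_coe, Finset.mem_filter, Finset.mem_powerset]
        refine ⟨Finset.subset_univ _, ?_⟩
        intro u hu w hw huw hadj
        simp only [Finset.mem_filter, Finset.mem_univ, true_and] at hu hw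
        rcases hc u w hadj with h | h
        · exact h hu
        · exact h hw)]
  apply Finset.sum_congr rfl
  intro I hI
  simp only [Finset.mem_filter, Finset.mem_powerset] at hI
  obtain ⟨-, hind⟩ := hI
  have hzero : ∀ i, (0 : ℕ) < a i := fun i => Nat.lt_of_lt_of_le Nat.zero_lt_one (ha i).le
  have hfib : S.filter (fun c => Finset.univ.filter (fun i => (c i).val = 0) = I) =
      Fintype.piFinset (fun i => if i ∈ I then Finset.univ.filter (fun v : Fin (a i) => v.val = 0)
        else Finset.univ.filter (fun v : Fin (a i) => v.val ≠ 0)) := by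
    ext c
    simp only [Finset.mem_filter, hS, Finset.mem_univ, true_and, Fintype.mem_piFinset]
    constructor
    · rintro ⟨hSc, hzs⟩ i
      by_cases hi : i ∈ I
      · rw [if_pos hi]
        simp only [Finset.mem_filter, Finset.mem_univ, true_and]
        have : i ∈ Finset.univ.filter (fun j => (c j).val = 0) := hzs ▸ hi
        simpa using this
      · rw [if_neg hi]
        simp only [Finset.mem_filter, Finset.mem_univ, true_and]
        intro h0
        exact hi (hzs ▸ (by simpa using h0 : i ∈ Finset.univ.filter (fun j => (c j).val = 0)))
    · intro h
      constructor
      · intro u w hadj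
        by_contra hcon
        push_neg at hcon
        obtain ⟨h0u, h0w⟩ := hcon
        have hu : u ∈ I := by
          by_contra hu
          have := h u; rw [if_neg hu] at this
          simp only [Finset.mem_filter, Finset.mem_univ, true_and] at this
          exact this h0u
        have hw : w ∈ I := by
          by_contra hw
          have := h w; rw [if_neg hw] at this
          simp only [Finset.mem_filter, Finset.mem_univ, true_and] at this
          exact this h0w
        exact hind u hu w hw hadj.ne hadj
      · ext i
        simp only [Finset.mem_filter, Finset.mem_univ, true_and]
        constructor
        · intro h0
          by_contra hi
          have := h i; rw [if_neg hi] at this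
          simp only [Finset.mem_filter, Finset.mem_univ, true_and] at this
          exact this h0
        · intro hi
          have := h i; rw [if_pos hi] at this
          exact (Finset.mem_filter.1 this).2
  rw [hfib, Fintype.card_piFinset]
  have hcards : ∀ i : Fin n,
      (if i ∈ I then Finset.univ.filter (fun v : Fin (a i) => v.val = 0)
        else Finset.univ.filter (fun v : Fin (a i) => v.val ≠ 0)).card =
      if i ∈ I then 1 else a i - 1 := by
    intro i
    have h0 : (Finset.univ.filter (fun v : Fin (a i) => v.val = 0)) = {(⟨0, hzero i⟩ : Fin (a i))} := by
      ext v
      simp [Fin.ext_iff]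
    have hcard0 : (Finset.univ.filter (fun v : Fin (a i) => v.val = 0)).card = 1 := by
      rw [h0]; rfl
    by_cases hi : i ∈ I
    · rw [if_pos hi, if_pos hi, hcard0]
    · rw [if_neg hi, if_neg hi]
      have h1 : (Finset.univ.filter (fun v : Fin (a i) => v.val ≠ 0)) =
          Finset.univ \ (Finset.univ.filter (fun v : Fin (a i) => v.val = 0)) := by
        ext v; simp
      rw [h1, Finset.card_sdiff_of_subset (Finset.filter_subset _ _), hcard0, Finset.card_univ,
        Fintype.card_fin]
  calc ∏ i, (if i ∈ I then Finset.univ.filter (fun v : Fin (a i) => v.val = 0)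
        else Finset.univ.filter (fun v : Fin (a i) => v.val ≠ 0)).card
      = ∏ i, (if i ∈ I then 1 else a i - 1) := Finset.prod_congr rfl (fun i _ => hcards i)
    _ = (∏ i ∈ Iᶜ, (if i ∈ I then 1 else a i - 1)) * ∏ i ∈ I, (if i ∈ I then 1 else a i - 1) :=
        (Finset.prod_compl_mul_prod I _).symm
    _ = ∏ i ∈ Iᶜ, (a i - 1) := by
        rw [Finset.prod_congr rfl (fun i hi => if_neg (Finset.mem_compl.1 hi)),
          Finset.prod_congr rfl (fun i hi => if_pos hi), Finset.prod_const_one, mul_one]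

/-- Let `f` be the multilinear polynomial whose value at each `(a_1, …, a_n)` with all
`a_i > 1` is the number of `n`-element independent sets of the clique extension of the
first kind `G(a_1, …, a_n)`. Then `U_G(x) = (−x)^n · f(1 − 1/x, …, 1 − 1/x)` for
`x ≠ 0`. -/
theorem uPoly_eq_multilinear_eval {n : ℕ} (G : SimpleGraph (Fin n))
    (f : MvPolynomial (Fin n) ℝ)
    (hdeg : ∀ i, f.degreeOf i ≤ 1)
    (hcount : ∀ a : Fin n → ℕ, (∀ i, 1 < a i) →
      MvPolynomial.eval (fun i => (a i : ℝ)) f = (numIndep (cliqueExt G a) n : ℝ))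
    (x : ℝ) (hx : x ≠ 0) :
    uPoly G x = (-x) ^ n * MvPolynomial.eval (fun _ => 1 - 1 / x) f := by
  classical
  set indS : Finset (Finset (Fin n)) := Finset.univ.powerset.filter
      (fun I : Finset (Fin n) => ∀ u ∈ I, ∀ w ∈ I, u ≠ w → ¬ G.Adj u w) with hindS
  set g : MvPolynomial (Fin n) ℝ :=
    ∑ I ∈ indS, ∏ i ∈ Iᶜ, (MvPolynomial.X i - MvPolynomial.C 1) with hg
  have hg_eval : ∀ v : Fin n → ℝ, MvPolynomial.eval v g = ∑ I ∈ indS, ∏ i ∈ Iᶜ, (v i - 1) := by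
    intro v
    simp only [hg, map_sum, map_prod, map_sub, MvPolynomial.eval_X, MvPolynomial.eval_C]
  have hfg : f = g := by
    have hz : f - g = 0 := by
      apply grid_zero
      intro a ha
      rw [map_sub, hcount a ha, hg_eval, count_key G a ha]
      have : ((∑ I ∈ indS, ∏ i ∈ Iᶜ, (a i - 1) : ℕ) : ℝ) =
          ∑ I ∈ indS, ∏ i ∈ Iᶜ, ((a i : ℝ) - 1) := by
        rw [Nat.cast_sum]
        refine Finset.sum_congr rfl (fun I _ => ?_)
        rw [Nat.cast_prod]
        refine Finset.prod_congr rfl (fun i _ => ?_)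
        rw [Nat.cast_sub (ha i).le, Nat.cast_one]
      rw [this, sub_self]
    exact sub_eq_zero.1 hz
  rw [hfg, hg_eval, uPoly, Finset.mul_sum]
  refine Finset.sum_congr (by rw [hindS]; ext I; simp) ?_
  intro I hI
  have hIcard : I.card ≤ n := by
    simpa using Finset.card_le_card (Finset.subset_univ I)
  have hcompl : Iᶜ.card = n - I.card := by
    rw [Finset.card_compl, Fintype.card_fin]
  rw [Finset.prod_const, hcompl]
  have hfac : (1 - 1 / x - 1 : ℝ) = -(1/x) := by ring
  rw [hfac]
  have hsplit : n = I.card + (n - I.card) := (Nat.add_sub_cancel' hIcard).symm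
  rw [show (-x) ^ n = (-x) ^ I.card * (-x) ^ (n - I.card) by rw [← pow_add, ← hsplit]]
  rw [mul_assoc, ← mul_pow]
  have : (-x) * -(1/x) = 1 := by field_simp
  rw [this, one_pow, mul_one]
end

section
/- Suppose G = G₁ +_{S,v} G₂ is the clique join of graphs G₁ and G₂ (S a clique of G₁ identified suitably with vertex v of G₂), and suppose x = x₁ +_{S,v} x₂ is the gluing of vectors, meaning x_u = x_{1u}·x_{2v} for u ∈ S, x_u = x_{1u} for u ∈ V₁∖S, x_u = x_{2u} for u ∈ V₂∖{v}. If Z_{G₁}(x₁) = 0 and Z_{G₂}(x₂) = 0, then Z_G(x) = Z_{G₁∖S}(x₁)·Z_{G₂∖{v}}(x₂) − ∑_{u∈S} x_{1u}x_{2v}·Z_{G₁∖N⁺(u)}(x₁)·Z_{G₂∖N⁺(v)}(x₂) = 0. -/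
open Finset


open scoped Classical in
/-- The multivariate signed independence polynomial of `G`, restricted to independent
sets contained in `A`: `Z_G(x) = ∑_{I ⊆ A independent} ∏_{v ∈ I} (−x_v)`. -/
noncomputable def zPoly {V : Type*} [Fintype V] [DecidableEq V]
    (G : SimpleGraph V) (A : Finset V) (x : V → ℝ) : ℝ :=
  ∑ I ∈ A.powerset.filter (fun I : Finset V => ∀ u ∈ I, ∀ w ∈ I, u ≠ w → ¬ G.Adj u w),
    ∏ v ∈ I, (-(x v))

open scoped Classical in
/-- The closed neighborhood `N⁺(u) = {u} ∪ {neighbors of u}` as a finset. -/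
noncomputable def closedNbhd {V : Type*} [Fintype V] (G : SimpleGraph V) (u : V) :
    Finset V :=
  Finset.univ.filter (fun w => w = u ∨ G.Adj u w)

/-- The clique join `G₁ +_{S,v} G₂`: vertices of `G₁` together with the vertices of
`G₂` other than `v`; every vertex of the clique `S ⊆ V(G₁)` inherits all adjacencies
of `v` in `G₂`. -/
def cliqueJoin {V₁ V₂ : Type*} [DecidableEq V₁] [DecidableEq V₂]
    (G₁ : SimpleGraph V₁) (G₂ : SimpleGraph V₂) (S : Finset V₁) (v : V₂) :
    SimpleGraph (V₁ ⊕ {u : V₂ // u ≠ v}) where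
  Adj p q :=
    match p, q with
    | Sum.inl a, Sum.inl b => G₁.Adj a b
    | Sum.inl a, Sum.inr b => a ∈ S ∧ G₂.Adj v b.val
    | Sum.inr a, Sum.inl b => b ∈ S ∧ G₂.Adj v a.val
    | Sum.inr a, Sum.inr b => G₂.Adj a.val b.val
  symm := by
    constructor
    rintro (a | a) (b | b) h
    · exact h.symm
    · exact h
    · exact h
    · exact h.symm
  loopless := by
    constructor
    rintro (a | a) h
    · exact G₁.irrefl h
    · exact G₂.irrefl h

/-- The gluing `x = x₁ +_{S,v} x₂` of vectors: `x_u = x₁_u·x₂_v` for `u ∈ S`,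
`x_u = x₁_u` for `u ∈ V₁ ∖ S`, `x_u = x₂_u` for `u ∈ V₂ ∖ {v}`. -/
def glue {V₁ V₂ : Type*} [DecidableEq V₁] (S : Finset V₁) (v : V₂)
    (x₁ : V₁ → ℝ) (x₂ : V₂ → ℝ) : V₁ ⊕ {u : V₂ // u ≠ v} → ℝ
  | Sum.inl u => if u ∈ S then x₁ u * x₂ v else x₁ u
  | Sum.inr u => x₂ u.val

lemma inter_eq_singleton {W : Type*} [DecidableEq W] {G : SimpleGraph W} {S I : Finset W}
    (hS : G.IsClique (S : Set W))
    (hind : ∀ u ∈ I, ∀ w ∈ I, u ≠ w → ¬ G.Adj u w)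
    {u : W} (hu : u ∈ I ∩ S) : I ∩ S = {u} := by
  obtain ⟨huI, huS⟩ := mem_inter.1 hu
  ext w
  simp only [mem_inter, mem_singleton]
  constructor
  · rintro ⟨hwI, hwS⟩
    by_contra hne
    exact hind u huI w hwI (fun h => hne h.symm) (hS huS hwS (fun h => hne h.symm))
  · rintro rfl; exact ⟨huI, huS⟩

theorem zPoly_clique_decomp {W : Type*} [Fintype W] [DecidableEq W]
    (G : SimpleGraph W) (A S : Finset W) (hSA : S ⊆ A)
    (hS : G.IsClique (S : Set W)) (x : W → ℝ) :
    zPoly G A x = zPoly G (A \ S) x +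
      ∑ u ∈ S, (-(x u)) * zPoly G (A \ closedNbhd G u) x := by
  classical
  unfold zPoly
  rw [← Finset.sum_filter_add_sum_filter_not
    (A.powerset.filter (fun I : Finset W => ∀ u ∈ I, ∀ w ∈ I, u ≠ w → ¬ G.Adj u w))
    (fun I => I ∩ S = ∅)]
  congr 1
  · apply Finset.sum_congr _ (fun _ _ => rfl)
    ext I
    simp only [mem_filter, mem_powerset, subset_sdiff, ← disjoint_iff_inter_eq_empty]
    tauto
  · simp only [Finset.mul_sum]
    rw [Finset.sum_sigma']
    refine Finset.sum_bij'
      (i := fun I hI => ⟨(Finset.nonempty_iff_ne_empty.2 (Finset.mem_filter.1 hI).2).choose,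
        I.erase ((Finset.nonempty_iff_ne_empty.2 (Finset.mem_filter.1 hI).2).choose)⟩)
      (j := fun p hp => insert p.1 p.2) ?_ ?_ ?_ ?_ ?_
    · -- hi : image in sigma set
      intro I hI
      obtain ⟨hI', hne⟩ := Finset.mem_filter.1 hI
      obtain ⟨hIA, hind⟩ := Finset.mem_filter.1 hI'
      rw [mem_powerset] at hIA
      set u := (Finset.nonempty_iff_ne_empty.2 hne).choose with hu
      have humem : u ∈ I ∩ S := (Finset.nonempty_iff_ne_empty.2 hne).choose_spec
      obtain ⟨huI, huS⟩ := mem_inter.1 humem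
      refine Finset.mem_sigma.2 ⟨huS, Finset.mem_filter.2 ⟨mem_powerset.2 ?_, ?_⟩⟩
      · intro w hw
        obtain ⟨hwne, hwI⟩ := Finset.mem_erase.1 hw
        refine Finset.mem_sdiff.2 ⟨hIA hwI, ?_⟩
        simp only [closedNbhd, mem_filter, mem_univ, true_and]
        push_neg
        exact ⟨hwne, hind u huI w hwI (Ne.symm hwne)⟩
      · intro a ha b hb
        exact hind a (Finset.erase_subset _ _ ha) b (Finset.erase_subset _ _ hb)
    · -- hj
      rintro ⟨u, J⟩ hp
      obtain ⟨huS, hJ⟩ := Finset.mem_sigma.1 hp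
      obtain ⟨hJA, hind⟩ := Finset.mem_filter.1 hJ
      rw [mem_powerset] at hJA
      have hJN : ∀ w ∈ J, w ≠ u ∧ ¬ G.Adj u w := by
        intro w hw
        have := (Finset.mem_sdiff.1 (hJA hw)).2
        simp only [closedNbhd, mem_filter, mem_univ, true_and] at this
        push_neg at this
        exact this
      have huJ : u ∉ J := fun h => (hJN u h).1 rfl
      refine Finset.mem_filter.2 ⟨Finset.mem_filter.2 ⟨mem_powerset.2 ?_, ?_⟩, ?_⟩
      · intro w hw
        rcases Finset.mem_insert.1 hw with rfl | hw
        · exact hSA huS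
        · exact (Finset.mem_sdiff.1 (hJA hw)).1
      · intro a ha b hb hab
        rcases Finset.mem_insert.1 ha with rfl | ha
        · rcases Finset.mem_insert.1 hb with rfl | hb
          · exact absurd rfl hab
          · exact (hJN b hb).2
        · rcases Finset.mem_insert.1 hb with rfl | hb
          · exact fun hadj => (hJN a ha).2 hadj.symm
          · exact hind a ha b hb hab
      · intro h
        have : u ∈ (insert u J) ∩ S := mem_inter.2 ⟨mem_insert_self _ _, huS⟩
        rw [h] at this
        exact absurd this (Finset.notMem_empty u)
    · -- left_inv
      intro I hI
      obtain ⟨hI', hne⟩ := Finset.mem_filter.1 hI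
      set u := (Finset.nonempty_iff_ne_empty.2 hne).choose
      have humem : u ∈ I ∩ S := (Finset.nonempty_iff_ne_empty.2 hne).choose_spec
      exact Finset.insert_erase (mem_inter.1 humem).1
    · -- right_inv
      rintro ⟨u, J⟩ hp
      obtain ⟨huS, hJ⟩ := Finset.mem_sigma.1 hp
      obtain ⟨hJA, hind⟩ := Finset.mem_filter.1 hJ
      rw [mem_powerset] at hJA
      have hJN : ∀ w ∈ J, w ≠ u := by
        intro w hw
        have := (Finset.mem_sdiff.1 (hJA hw)).2
        simp only [closedNbhd, mem_filter, mem_univ, true_and] at this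
        push_neg at this
        exact this.1
      have huJ : u ∉ J := fun h => hJN u h rfl
      have hIS : (insert u J) ∩ S = {u} := by
        ext w
        simp only [mem_inter, mem_singleton, mem_insert]
        constructor
        · rintro ⟨rfl | hwJ, hwS⟩
          · rfl
          · -- w ∈ J ∩ S : need contradiction? no: J avoids N⁺ u but can contain S elems? handled earlier? need clique
            exfalso
            rcases eq_or_ne w u with rfl | hwu
            · exact huJ hwJ
            · have hadj := hS hwS huS hwu
              have := (Finset.mem_sdiff.1 (hJA hwJ)).2
              simp only [closedNbhd, mem_filter, mem_univ, true_and] at this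
              exact this (Or.inr hadj.symm)
        · rintro rfl; exact ⟨Or.inl rfl, huS⟩
      have hmin : ∀ (h : ((insert u J) ∩ S).Nonempty), h.choose = u := by
        intro h
        have h2 : Exists.choose h ∈ ({u} : Finset W) := by
          rw [← hIS]; exact h.choose_spec
        exact mem_singleton.1 h2
      refine Sigma.ext (hmin _) ?_
      simp only [hmin, heq_eq_eq]
      exact Finset.erase_insert huJ
    · -- values
      intro I hI
      obtain ⟨hI', hne⟩ := Finset.mem_filter.1 hI
      set u := (Finset.nonempty_iff_ne_empty.2 hne).choose
      have humem : u ∈ I ∩ S := (Finset.nonempty_iff_ne_empty.2 hne).choose_spec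
      rw [← Finset.prod_erase_mul I _ (mem_inter.1 humem).1]
      ring


section Prod
variable {V₁ V₂ : Type*} [Fintype V₁] [Fintype V₂] [DecidableEq V₁] [DecidableEq V₂]

open scoped Classical in
noncomputable def comb (v : V₂) (A₁ : Finset V₁) (B₂ : Finset V₂) :
    Finset (V₁ ⊕ {u : V₂ // u ≠ v}) :=
  A₁.map ⟨Sum.inl, Sum.inl_injective⟩ ∪
    (B₂.subtype (fun u => u ≠ v)).map ⟨Sum.inr, Sum.inr_injective⟩

lemma mem_comb_inl {v : V₂} {A₁ : Finset V₁} {B₂ : Finset V₂} {a : V₁} :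
    Sum.inl a ∈ comb v A₁ B₂ ↔ a ∈ A₁ := by
  simp [comb]

lemma mem_comb_inr {v : V₂} {A₁ : Finset V₁} {B₂ : Finset V₂} {b : {u : V₂ // u ≠ v}} :
    Sum.inr b ∈ comb v A₁ B₂ ↔ b.val ∈ B₂ := by
  simp only [comb, mem_union, mem_map, Function.Embedding.coeFn_mk, Finset.mem_subtype]
  constructor
  · rintro (⟨a, _, h⟩ | ⟨c, hc, h⟩)
    · exact absurd h (by simp)
    · obtain rfl := Sum.inr_injective h
      exact hc
  · intro h
    exact Or.inr ⟨b, h, rfl⟩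

open scoped Classical in
lemma prod_split {v : V₂} (I : Finset (V₁ ⊕ {u : V₂ // u ≠ v}))
    (f : (V₁ ⊕ {u : V₂ // u ≠ v}) → ℝ) :
    ∏ p ∈ I, f p =
      (∏ a ∈ Finset.univ.filter (fun a : V₁ => Sum.inl a ∈ I), f (Sum.inl a)) *
        ∏ b ∈ Finset.univ.filter (fun b : {u : V₂ // u ≠ v} => Sum.inr b ∈ I), f (Sum.inr b) := by
  classical
  have hI : I = (Finset.univ.filter (fun a : V₁ => Sum.inl a ∈ I)).map
        ⟨Sum.inl, Sum.inl_injective⟩ ∪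
      (Finset.univ.filter (fun b : {u : V₂ // u ≠ v} => Sum.inr b ∈ I)).map
        ⟨Sum.inr, Sum.inr_injective⟩ := by
    ext p
    rcases p with a | b <;> simp
  have hdisj : Disjoint
      ((Finset.univ.filter (fun a : V₁ => Sum.inl a ∈ I)).map ⟨Sum.inl, Sum.inl_injective⟩)
      ((Finset.univ.filter (fun b : {u : V₂ // u ≠ v} => Sum.inr b ∈ I)).map
        ⟨Sum.inr, Sum.inr_injective⟩) := by
    rw [Finset.disjoint_left]
    rintro p hp hq
    simp only [mem_map, Function.Embedding.coeFn_mk] at hp hq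
    obtain ⟨a, _, rfl⟩ := hp
    obtain ⟨b, _, h⟩ := hq
    exact absurd h (by simp)
  conv_lhs => rw [hI]
  rw [Finset.prod_union hdisj, Finset.prod_map, Finset.prod_map]
  rfl

theorem zPoly_comb (G₁ : SimpleGraph V₁) (G₂ : SimpleGraph V₂) (S : Finset V₁) (v : V₂)
    (A₁ : Finset V₁) (B₂ : Finset V₂) (x₁ : V₁ → ℝ) (x₂ : V₂ → ℝ)
    (hA₁ : ∀ a ∈ A₁, a ∉ S) (hv : v ∉ B₂) :
    zPoly (cliqueJoin G₁ G₂ S v) (comb v A₁ B₂) (glue S v x₁ x₂) =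
      zPoly G₁ A₁ x₁ * zPoly G₂ B₂ x₂ := by
  classical
  unfold zPoly
  rw [Finset.sum_mul_sum, ← Finset.sum_product']
  refine Finset.sum_bij'
    (i := fun I _ => (Finset.univ.filter (fun a : V₁ => Sum.inl a ∈ I),
      (Finset.univ.filter (fun b : {u : V₂ // u ≠ v} => Sum.inr b ∈ I)).image Subtype.val))
    (j := fun p _ => comb v p.1 p.2) ?_ ?_ ?_ ?_ ?_
  · -- hi
    intro I hI
    obtain ⟨hIc, hind⟩ := Finset.mem_filter.1 hI
    rw [mem_powerset] at hIc
    refine Finset.mem_product.2 ⟨Finset.mem_filter.2 ⟨mem_powerset.2 ?_, ?_⟩,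
      Finset.mem_filter.2 ⟨mem_powerset.2 ?_, ?_⟩⟩
    · intro a ha
      exact mem_comb_inl.1 (hIc (Finset.mem_filter.1 ha).2)
    · intro a ha b hb hab hadj
      exact hind _ (Finset.mem_filter.1 ha).2 _ (Finset.mem_filter.1 hb).2
        (by simpa using hab) hadj
    · intro b hb
      simp only [Finset.mem_image, Finset.mem_filter] at hb
      obtain ⟨c, ⟨_, hc⟩, rfl⟩ := hb
      exact mem_comb_inr.1 (hIc hc)
    · intro a ha b hb hab hadj
      simp only [Finset.mem_image, Finset.mem_filter] at ha hb
      obtain ⟨c, ⟨_, hc⟩, rfl⟩ := ha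
      obtain ⟨d, ⟨_, hd⟩, rfl⟩ := hb
      exact hind _ hc _ hd (fun h => hab (congrArg Subtype.val (Sum.inr_injective h))) hadj
  · -- hj
    rintro ⟨I₁, I₂⟩ hp
    obtain ⟨h1, h2⟩ := Finset.mem_product.1 hp
    obtain ⟨h1A, h1i⟩ := Finset.mem_filter.1 h1
    obtain ⟨h2A, h2i⟩ := Finset.mem_filter.1 h2
    rw [mem_powerset] at h1A h2A
    refine Finset.mem_filter.2 ⟨mem_powerset.2 ?_, ?_⟩
    · intro p hp'
      rcases p with a | b
      · exact mem_comb_inl.2 (h1A (mem_comb_inl.1 hp'))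
      · exact mem_comb_inr.2 (h2A (mem_comb_inr.1 hp'))
    · rintro (a | a) ha (b | b) hb hab hadj
      · exact h1i a (mem_comb_inl.1 ha) b (mem_comb_inl.1 hb) (by simpa using hab) hadj
      · exact hA₁ a (h1A (mem_comb_inl.1 ha)) hadj.1
      · exact hA₁ b (h1A (mem_comb_inl.1 hb)) hadj.1
      · exact h2i a.val (mem_comb_inr.1 ha) b.val (mem_comb_inr.1 hb)
          (fun h => hab (congrArg Sum.inr (Subtype.ext h))) hadj
  · -- left_inv
    intro I hI
    obtain ⟨hIc, _⟩ := Finset.mem_filter.1 hI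
    rw [mem_powerset] at hIc
    ext p
    rcases p with a | b
    · simp [mem_comb_inl]
    · simp only [mem_comb_inr, Finset.mem_image, Finset.mem_filter, Finset.mem_univ, true_and]
      constructor
      · rintro ⟨c, hc, hcb⟩
        obtain rfl : c = b := Subtype.ext hcb
        exact hc
      · intro h
        exact ⟨b, h, rfl⟩
  · -- right_inv
    rintro ⟨I₁, I₂⟩ hp
    obtain ⟨h1, h2⟩ := Finset.mem_product.1 hp
    obtain ⟨h2A, _⟩ := Finset.mem_filter.1 h2
    rw [mem_powerset] at h2A
    refine Prod.ext ?_ ?_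
    · ext a
      simp [mem_comb_inl]
    · ext b
      simp only [Finset.mem_image, Finset.mem_filter, Finset.mem_univ, true_and, mem_comb_inr]
      constructor
      · rintro ⟨c, hc, rfl⟩
        exact hc
      · intro hb
        have hbv : b ≠ v := fun h => hv (h ▸ h2A hb)
        exact ⟨⟨b, hbv⟩, hb, rfl⟩
  · -- values
    intro I hI
    obtain ⟨hIc, _⟩ := Finset.mem_filter.1 hI
    rw [mem_powerset] at hIc
    rw [prod_split]
    congr 1
    · apply Finset.prod_congr rfl
      intro a ha
      have haA : a ∈ A₁ := mem_comb_inl.1 (hIc (Finset.mem_filter.1 ha).2)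
      simp [glue, hA₁ a haA]
    · rw [Finset.prod_image]
      · apply Finset.prod_congr rfl
        intro b _
        rfl
      · intro a _ b _ h
        exact Subtype.ext h

lemma comb_sdiff_S (G₁ : SimpleGraph V₁) (G₂ : SimpleGraph V₂) (S : Finset V₁) (v : V₂) :
    (Finset.univ \ S.map ⟨Sum.inl, Sum.inl_injective⟩ :
        Finset (V₁ ⊕ {u : V₂ // u ≠ v})) =
      comb v (Finset.univ \ S) (Finset.univ \ {v}) := by
  classical
  ext p
  rcases p with a | b
  · simp [mem_comb_inl, mem_sdiff]
  · simp [mem_comb_inr, mem_sdiff, b.prop]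

lemma comb_sdiff_nbhd (G₁ : SimpleGraph V₁) (G₂ : SimpleGraph V₂) (S : Finset V₁) (v : V₂)
    {u : V₁} (hu : u ∈ S) :
    Finset.univ \ closedNbhd (cliqueJoin G₁ G₂ S v) (Sum.inl u) =
      comb v (Finset.univ \ closedNbhd G₁ u) (Finset.univ \ closedNbhd G₂ v) := by
  classical
  ext p
  rcases p with a | b
  · simp only [mem_sdiff, mem_univ, true_and, mem_comb_inl, closedNbhd, Finset.mem_filter]
    constructor
    · intro h h'
      apply h
      rcases h' with rfl | hadj
      · exact Or.inl rfl
      · exact Or.inr hadj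
    · intro h h'
      apply h
      rcases h' with h2 | hadj
      · exact Or.inl (Sum.inl_injective h2)
      · exact Or.inr hadj
  · simp only [mem_sdiff, mem_univ, true_and, mem_comb_inr, closedNbhd, Finset.mem_filter]
    constructor
    · intro h h'
      apply h
      rcases h' with h2 | hadj
      · exact absurd h2 b.prop
      · exact Or.inr ⟨hu, hadj⟩
    · intro h h'
      apply h
      rcases h' with h2 | hadj
      · exact absurd h2 (by simp)
      · exact Or.inr hadj.2

end Prod

/-- If `Z_{G₁}(x₁) = 0` and `Z_{G₂}(x₂) = 0`, then for the clique join
`G = G₁ +_{S,v} G₂` and the glued vector `x = x₁ +_{S,v} x₂`,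
`Z_G(x) = Z_{G₁∖S}(x₁)·Z_{G₂∖{v}}(x₂) −
  ∑_{u∈S} x₁_u x₂_v·Z_{G₁∖N⁺(u)}(x₁)·Z_{G₂∖N⁺(v)}(x₂) = 0`. -/
theorem zPoly_cliqueJoin_eq_zero {V₁ V₂ : Type*}
    [Fintype V₁] [Fintype V₂] [DecidableEq V₁] [DecidableEq V₂]
    (G₁ : SimpleGraph V₁) (G₂ : SimpleGraph V₂)
    (S : Finset V₁) (hS : G₁.IsClique (S : Set V₁)) (v : V₂)
    (x₁ : V₁ → ℝ) (x₂ : V₂ → ℝ)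
    (h1 : zPoly G₁ Finset.univ x₁ = 0) (h2 : zPoly G₂ Finset.univ x₂ = 0) :
    zPoly (cliqueJoin G₁ G₂ S v) Finset.univ (glue S v x₁ x₂) =
        zPoly G₁ (Finset.univ \ S) x₁ * zPoly G₂ (Finset.univ \ {v}) x₂ -
          ∑ u ∈ S, x₁ u * x₂ v *
            (zPoly G₁ (Finset.univ \ closedNbhd G₁ u) x₁ *
              zPoly G₂ (Finset.univ \ closedNbhd G₂ v) x₂) ∧
      zPoly (cliqueJoin G₁ G₂ S v) Finset.univ (glue S v x₁ x₂) = 0 := by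
  classical
  have hA₁S : ∀ u ∈ S, ∀ a ∈ Finset.univ \ closedNbhd G₁ u, a ∉ S := by
    intro u hu a ha haS
    have h := (mem_sdiff.1 ha).2
    simp only [closedNbhd, Finset.mem_filter, mem_univ, true_and] at h
    push_neg at h
    exact h.2 (hS hu haS (Ne.symm h.1))
  have key := zPoly_clique_decomp (cliqueJoin G₁ G₂ S v) Finset.univ
    (S.map ⟨Sum.inl, Sum.inl_injective⟩) (subset_univ _) (by
      intro p hp q hq hne
      simp only [coe_map, Set.mem_image, mem_coe, Function.Embedding.coeFn_mk] at hp hq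
      obtain ⟨a, ha, rfl⟩ := hp
      obtain ⟨b, hb, rfl⟩ := hq
      exact hS ha hb (fun h => hne (by rw [h]))) (glue S v x₁ x₂)
  rw [Finset.sum_map, comb_sdiff_S G₁ G₂ S v,
    zPoly_comb G₁ G₂ S v _ _ x₁ x₂ (by simp) (by simp)] at key
  have first : zPoly (cliqueJoin G₁ G₂ S v) Finset.univ (glue S v x₁ x₂) =
      zPoly G₁ (Finset.univ \ S) x₁ * zPoly G₂ (Finset.univ \ {v}) x₂ -
        ∑ u ∈ S, x₁ u * x₂ v *
          (zPoly G₁ (Finset.univ \ closedNbhd G₁ u) x₁ *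
            zPoly G₂ (Finset.univ \ closedNbhd G₂ v) x₂) := by
    rw [key, sub_eq_add_neg, ← Finset.sum_neg_distrib]
    congr 1
    apply Finset.sum_congr rfl
    intro u hu
    simp only [Function.Embedding.coeFn_mk]
    rw [comb_sdiff_nbhd G₁ G₂ S v hu,
      zPoly_comb G₁ G₂ S v _ _ x₁ x₂ (hA₁S u hu) (by simp [closedNbhd])]
    have : glue S v x₁ x₂ (Sum.inl u) = x₁ u * x₂ v := by simp [glue, hu]
    rw [this]
    ring
  refine ⟨first, ?_⟩
  rw [first]
  have d1 := zPoly_clique_decomp G₁ Finset.univ S (subset_univ _) hS x₁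
  rw [h1] at d1
  have d2 := zPoly_clique_decomp G₂ Finset.univ {v} (subset_univ _)
    (by rw [coe_singleton]; exact G₂.isClique_singleton v) x₂
  rw [h2, Finset.sum_singleton] at d2
  have hZ1 : zPoly G₁ (Finset.univ \ S) x₁ =
      ∑ u ∈ S, x₁ u * zPoly G₁ (Finset.univ \ closedNbhd G₁ u) x₁ := by
    have : ∑ u ∈ S, (-(x₁ u)) * zPoly G₁ (Finset.univ \ closedNbhd G₁ u) x₁ =
        -∑ u ∈ S, x₁ u * zPoly G₁ (Finset.univ \ closedNbhd G₁ u) x₁ := by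
      rw [← Finset.sum_neg_distrib]
      exact Finset.sum_congr rfl (fun u _ => by ring)
    rw [this] at d1
    linarith
  have hZ2 : zPoly G₂ (Finset.univ \ {v}) x₂ =
      x₂ v * zPoly G₂ (Finset.univ \ closedNbhd G₂ v) x₂ := by
    nlinarith [d2]
  rw [hZ1, hZ2, Finset.sum_mul, ← Finset.sum_sub_distrib]
  apply Finset.sum_eq_zero
  intro u hu
  ring
end
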